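/- If a CHC system S has a solution (an interpretation of relational predicates satisfying every clause and interpreting the query predicate as False), then S is infeasible, i.e., S has no models. -/
import Mathlib


/-- A Constrained Horn Clause: a list of body predicates, a constraint relating
the body valuations to a head valuation, and a head predicate. -/
structure Clause (R V : Type) where
  body : List R
  constr : List V → V → Prop
  head : R

/-- A CHC system: a set of clauses plus a query predicate. -/
structure CHCSystem (R V : Type) where
  clauses : Set (Clause R V)
  query : R

/-- Derivations (models rooted at a predicate): a derivation tree labeled by
clauses with per-node valuations satisfying each clause's constraint. -/
inductive Derives {R V : Type} (S : CHCSystem R V) : R → V → Prop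
  | step (c : Clause R V) (hc : c ∈ S.clauses) (vs : List V) (v : V)
      (hlen : vs.length = c.body.length)
      (hbody : ∀ (k : ℕ) (hk : k < vs.length) (hk' : k < c.body.length),
          Derives S (c.body.get ⟨k, hk'⟩) (vs.get ⟨k, hk⟩))
      (hconstr : c.constr vs v) :
      Derives S c.head v

/-- A solution: an interpretation of predicates as sets of valuations closed
under every clause and interpreting the query as False (the empty set). -/
def IsSolution {R V : Type} (S : CHCSystem R V) (i : R → Set V) : Prop :=
  (∀ c ∈ S.clauses, ∀ (vs : List V) (v : V), vs.length = c.body.length →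
      (∀ (k : ℕ) (hk : k < vs.length) (hk' : k < c.body.length),
        vs.get ⟨k, hk⟩ ∈ i (c.body.get ⟨k, hk'⟩)) →
      c.constr vs v → v ∈ i c.head) ∧
  i S.query = ∅

/-- If a CHC system has a solution, then it is infeasible: it has no models
(no derivation of the query predicate). -/
theorem stmt1 {R V : Type} (S : CHCSystem R V) (i : R → Set V)
    (hsol : IsSolution S i) : ∀ v : V, ¬ Derives S S.query v := by
  have key : ∀ r v, Derives S r v → v ∈ i r := by
    intro r v h
    induction h with
    | step c hc vs v hlen hbody hconstr ih =>
      exact hsol.1 c hc vs v hlen ih hconstr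
  intro v h
  have := key _ _ h
  rw [hsol.2] at this
  exact this
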